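/- Every finite simple graph is isomorphic to an induced subgraph of some distance critical simple graph. -/

import Mathlib

/-- A graph is *distance critical* if for every vertex `v` there is a pair of vertices of
`G − v` whose distance in `G − v` differs from their distance in `G`
(distances are `ℕ∞`-valued, `⊤` when there is no connecting path). -/
def IsDistanceCritical {V : Type*} (G : SimpleGraph V) : Prop :=
  ∀ v : V, ∃ x y : ({v}ᶜ : Set V),
    (G.induce ({v}ᶜ : Set V)).edist x y ≠ G.edist (x : V) (y : V)

open SimpleGraph

/-- cyclic-path adjacency on `Fin 4`: `0-1-2-3`. -/
def cyc (i j : Fin 4) : Prop :=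
  (i = 0 ∧ j = 1) ∨ (i = 1 ∧ j = 0) ∨ (i = 1 ∧ j = 2) ∨ (i = 2 ∧ j = 1) ∨
  (i = 2 ∧ j = 3) ∨ (i = 3 ∧ j = 2)

instance : DecidableRel cyc := fun i j => by unfold cyc; infer_instance

def gadgetAdj {V : Type} (G : SimpleGraph V) :
    (V ⊕ V × Fin 4) → (V ⊕ V × Fin 4) → Prop
  | Sum.inl u, Sum.inl v => G.Adj u v
  | Sum.inl u, Sum.inr (v, i) => u = v ∧ (i = 0 ∨ i = 3)
  | Sum.inr (v, i), Sum.inl u => u = v ∧ (i = 0 ∨ i = 3)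
  | Sum.inr (u, i), Sum.inr (v, j) => u = v ∧ cyc i j

def gadget {V : Type} (G : SimpleGraph V) : SimpleGraph (V ⊕ V × Fin 4) where
  Adj := gadgetAdj G
  symm := by
    constructor; rintro (u | ⟨u, i⟩) (v | ⟨v, j⟩) h <;> simp only [gadgetAdj, cyc] at h ⊢
    · exact h.symm
    · tauto
    · tauto
    · obtain ⟨rfl, h⟩ := h; exact ⟨rfl, by tauto⟩
  loopless := by
    constructor; rintro (u | ⟨u, i⟩) h <;> simp only [gadgetAdj, cyc] at h
    · exact G.loopless.irrefl u h
    · obtain ⟨-, h⟩ := h; fin_cases i <;> simp_all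

lemma edist_eq_two' {α : Type*} {M : SimpleGraph α} {x y z : α}
    (hxy : x ≠ y) (hadj : ¬M.Adj x y) (h1 : M.Adj x z) (h2 : M.Adj z y) :
    M.edist x y = 2 := by
  have hle : M.edist x y ≤ 2 := by
    have := M.edist_le (Walk.cons h1 (Walk.cons h2 Walk.nil))
    simpa using this
  have h0 : M.edist x y ≠ 0 := by simp [edist_eq_zero_iff, hxy]
  have h1' : M.edist x y ≠ 1 := by simp [edist_eq_one_iff_adj, hadj]
  have hnt : M.edist x y ≠ ⊤ := fun h => by simp [h] at hle
  lift M.edist x y to ℕ using hnt with n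
  have hle' : n ≤ 2 := by exact_mod_cast hle
  have h0' : n ≠ 0 := by exact_mod_cast h0
  have h1'' : n ≠ 1 := by exact_mod_cast h1'
  have : n = 2 := by omega
  exact_mod_cast congrArg (Nat.cast : ℕ → ℕ∞) this

lemma edist_ne_two' {α : Type*} {M : SimpleGraph α} {x y : α}
    (h : ∀ z, M.Adj x z → ¬M.Adj z y) : M.edist x y ≠ 2 := by
  intro he
  obtain ⟨p, hp⟩ := exists_walk_of_edist_eq_coe (k := 2) (by exact_mod_cast he)
  cases p with
  | nil => simp at hp
  | cons h1 q =>
    cases q with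
    | nil => simp at hp
    | cons h2 r =>
      cases r with
      | nil => exact h _ h1 h2
      | cons h3 s => simp at hp

theorem stmt_19 {V : Type} [Fintype V] (G : SimpleGraph V) :
    ∃ (W : Type) (_ : Fintype W) (H : SimpleGraph W),
      IsDistanceCritical H ∧ Nonempty (G ↪g H) := by
  classical
  refine ⟨V ⊕ V × Fin 4, inferInstance, gadget G, ?_, ⟨?_⟩⟩
  · rintro (v | ⟨v, i⟩)
    · -- remove `inl v`; take x = (v,0), y = (v,3), common neighbor was `inl v`
      refine ⟨⟨Sum.inr (v, 0), by simp⟩, ⟨Sum.inr (v, 3), by simp⟩, ?_⟩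
      have h2 : (gadget G).edist (Sum.inr (v, 0)) (Sum.inr (v, 3)) = 2 :=
        edist_eq_two' (z := Sum.inl v) (by simp) (by simp [gadget, gadgetAdj, cyc]; try decide)
          (by simp [gadget, gadgetAdj]) (by simp [gadget, gadgetAdj])
      rw [h2]
      apply edist_ne_two'
      rintro ⟨(u | ⟨u, j⟩), hz⟩ ha hb <;>
        simp only [Set.mem_compl_iff, Set.mem_singleton_iff] at hz <;>
        simp only [comap_adj, Function.Embedding.coe_subtype, gadget, gadgetAdj, cyc] at ha hb
      · exact hz (by rw [ha.1])
      · obtain ⟨rfl, ha⟩ := ha; obtain ⟨-, hb⟩ := hb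
        fin_cases j <;> simp_all
    · fin_cases i
      · -- remove (v,0); x = inl v, y = (v,1)
        refine ⟨⟨Sum.inl v, by simp⟩, ⟨Sum.inr (v, 1), by simp⟩, ?_⟩
        have h2 : (gadget G).edist (Sum.inl v) (Sum.inr (v, 1)) = 2 :=
          edist_eq_two' (z := Sum.inr (v, 0)) (by simp) (by simp [gadget, gadgetAdj, cyc]; try decide)
            (by simp [gadget, gadgetAdj]) (by simp [gadget, gadgetAdj, cyc]; try decide)
        rw [h2]
        apply edist_ne_two'
        rintro ⟨(u | ⟨u, j⟩), hz⟩ ha hb <;>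
          simp only [Set.mem_compl_iff, Set.mem_singleton_iff] at hz <;>
          simp only [comap_adj, Function.Embedding.coe_subtype, gadget, gadgetAdj, cyc] at ha hb
        · exact absurd hb.2 (by decide)
        · obtain ⟨rfl, ha⟩ := ha
          obtain ⟨-, hb⟩ := hb
          fin_cases j <;> simp_all
      · -- remove (v,1); x = (v,0), y = (v,2)
        refine ⟨⟨Sum.inr (v, 0), by simp⟩, ⟨Sum.inr (v, 2), by simp⟩, ?_⟩
        have h2 : (gadget G).edist (Sum.inr (v, 0)) (Sum.inr (v, 2)) = 2 :=
          edist_eq_two' (z := Sum.inr (v, 1)) (by simp) (by simp [gadget, gadgetAdj, cyc]; try decide)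
            (by simp [gadget, gadgetAdj, cyc]; try decide) (by simp [gadget, gadgetAdj, cyc]; try decide)
        rw [h2]
        apply edist_ne_two'
        rintro ⟨(u | ⟨u, j⟩), hz⟩ ha hb <;>
          simp only [Set.mem_compl_iff, Set.mem_singleton_iff] at hz <;>
          simp only [comap_adj, Function.Embedding.coe_subtype, gadget, gadgetAdj, cyc] at ha hb
        · obtain ⟨rfl, -⟩ := ha; obtain ⟨-, hb⟩ := hb; simp_all
        · obtain ⟨rfl, ha⟩ := ha; obtain ⟨-, hb⟩ := hb
          fin_cases j <;> simp_all
      · -- remove (v,2); x = (v,1), y = (v,3)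
        refine ⟨⟨Sum.inr (v, 1), by simp⟩, ⟨Sum.inr (v, 3), by simp⟩, ?_⟩
        have h2 : (gadget G).edist (Sum.inr (v, 1)) (Sum.inr (v, 3)) = 2 :=
          edist_eq_two' (z := Sum.inr (v, 2)) (by simp) (by simp [gadget, gadgetAdj, cyc]; try decide)
            (by simp [gadget, gadgetAdj, cyc]; try decide) (by simp [gadget, gadgetAdj, cyc]; try decide)
        rw [h2]
        apply edist_ne_two'
        rintro ⟨(u | ⟨u, j⟩), hz⟩ ha hb <;>
          simp only [Set.mem_compl_iff, Set.mem_singleton_iff] at hz <;>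
          simp only [comap_adj, Function.Embedding.coe_subtype, gadget, gadgetAdj, cyc] at ha hb
        · obtain ⟨rfl, ha⟩ := ha; obtain ⟨-, hb⟩ := hb; simp_all
        · obtain ⟨rfl, ha⟩ := ha; obtain ⟨-, hb⟩ := hb
          fin_cases j <;> simp_all
      · -- remove (v,3); x = (v,2), y = inl v
        refine ⟨⟨Sum.inr (v, 2), by simp⟩, ⟨Sum.inl v, by simp⟩, ?_⟩
        have h2 : (gadget G).edist (Sum.inr (v, 2)) (Sum.inl v) = 2 :=
          edist_eq_two' (z := Sum.inr (v, 3)) (by simp) (by simp [gadget, gadgetAdj, cyc]; try decide)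
            (by simp [gadget, gadgetAdj, cyc]; try decide) (by simp [gadget, gadgetAdj, cyc]; try decide)
        rw [h2]
        apply edist_ne_two'
        rintro ⟨(u | ⟨u, j⟩), hz⟩ ha hb <;>
          simp only [Set.mem_compl_iff, Set.mem_singleton_iff] at hz <;>
          simp only [comap_adj, Function.Embedding.coe_subtype, gadget, gadgetAdj, cyc] at ha hb
        · obtain ⟨rfl, ha⟩ := ha; simp_all
        · obtain ⟨rfl, ha⟩ := ha
          fin_cases j <;> simp_all
  · exact ⟨⟨Sum.inl, fun a b h => by simpa using h⟩, Iff.rfl⟩
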